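/- Let M be an invertible n×n real matrix, and let S be a Givens rotation acting on coordinates k < ℓ (orthogonal, equal to identity except on rows/columns k, ℓ, where it is a 2×2 rotation by angle θ). Then |Φ(SM) − Φ(M)| ≤ C·‖M‖·‖M⁻¹‖ for an absolute constant C, where Φ is the quasi-entropy Φ(M) = −∑_{i,j} f̂(M(i,j), M⁻¹(j,i)) with f̂(x,y) = −xy·log₂|xy| for xy ≠ 0, else 0, and ‖·‖ denotes spectral norm. -/

import Mathlib

open Matrix Real

noncomputable def fhat (x y : ℝ) : ℝ :=
  if x * y = 0 then 0 else -(x * y) * Real.logb 2 |x * y|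

noncomputable def Phi {n : ℕ} (M : Matrix (Fin n) (Fin n) ℝ) : ℝ :=
  -∑ i : Fin n, ∑ j : Fin n, fhat (M i j) (M⁻¹ j i)

/-- The spectral norm (ℓ²→ℓ² operator norm) of a real matrix. -/
noncomputable def specNorm {m n : Type*} [Fintype m] [Fintype n] [DecidableEq n]
    (A : Matrix m n ℝ) : ℝ :=
  ‖LinearMap.toContinuousLinearMap (Matrix.toEuclideanLin A)‖

/-- The Givens rotation on coordinates `k < ℓ` with angle `θ`. -/
noncomputable def givens {n : ℕ} (k ℓ : Fin n) (θ : ℝ) : Matrix (Fin n) (Fin n) ℝ :=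
  fun i j =>
    if i = k ∧ j = k then cos θ
    else if i = k ∧ j = ℓ then sin θ
    else if i = ℓ ∧ j = k then -sin θ
    else if i = ℓ ∧ j = ℓ then cos θ
    else if i = j then 1 else 0

section Aux

noncomputable def gq (t : ℝ) : ℝ := -t * Real.logb 2 |t|

lemma gq_zero : gq 0 = 0 := by simp [gq]

lemma gq_bound {t : ℝ} (h : |t| ≤ 2) : |gq t| ≤ 2 := by
  rcases eq_or_ne t 0 with rfl | ht
  · simp [gq]
  have h0 : 0 < |t| := abs_pos.2 ht
  have hlog2 : (0:ℝ) < Real.log 2 := Real.log_pos (by norm_num)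
  rcases le_or_gt |t| 1 with h1 | h1
  · have hlt := Real.abs_log_mul_self_lt |t| h0 h1
    have heq : |gq t| = abs (Real.log |t| * |t|) / Real.log 2 := by
      rw [gq, Real.logb, abs_mul, abs_neg, abs_div, abs_of_pos hlog2, abs_mul, abs_abs]
      ring
    rw [heq, div_le_iff₀ hlog2]
    nlinarith [Real.log_two_gt_d9]
  · have hl1 : 0 ≤ Real.logb 2 |t| := Real.logb_nonneg (by norm_num) h1.le
    have hl2 : Real.logb 2 |t| ≤ 1 := by
      calc Real.logb 2 |t| ≤ Real.logb 2 2 := Real.logb_le_logb_of_le (by norm_num) h0 h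
        _ = 1 := Real.logb_self_eq_one (by norm_num)
    have heq : |gq t| = |t| * abs (Real.logb 2 |t|) := by
      rw [gq, abs_mul, abs_neg]
    rw [heq, abs_of_nonneg hl1]
    nlinarith

lemma gq_scale {r : ℝ} (hr : 0 < r) (t : ℝ) : gq (r * t) = r * gq t - r * t * Real.logb 2 r := by
  rcases eq_or_ne t 0 with rfl | ht
  · simp [gq]
  have habs : |r * t| = r * |t| := by rw [abs_mul, abs_of_pos hr]
  rw [gq, gq, habs, Real.logb, Real.logb, Real.logb,
    Real.log_mul hr.ne' (abs_ne_zero.2 ht)]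
  field_simp
  ring

-- key oscillation bound
lemma gq_pair {a b r : ℝ} (ha : |a| ≤ r) (hb : |b| ≤ r) :
    |gq a + gq b - gq (a + b)| ≤ 6 * r := by
  have hr0 : 0 ≤ r := le_trans (abs_nonneg a) ha
  rcases eq_or_lt_of_le hr0 with hr | hr
  · have ha0 : a = 0 := abs_eq_zero.1 (le_antisymm (hr ▸ ha) (abs_nonneg a))
    have hb0 : b = 0 := abs_eq_zero.1 (le_antisymm (hr ▸ hb) (abs_nonneg b))
    simp [ha0, hb0, gq_zero, ← hr]
  · set u := a / r with hu
    set v := b / r with hv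
    have hau : a = r * u := by rw [hu]; field_simp
    have hbv : b = r * v := by rw [hv]; field_simp
    have huu : |u| ≤ 1 := by
      rw [hu, abs_div, abs_of_pos hr, div_le_one hr]; exact ha
    have hvv : |v| ≤ 1 := by
      rw [hv, abs_div, abs_of_pos hr, div_le_one hr]; exact hb
    have key : gq a + gq b - gq (a + b) = r * (gq u + gq v - gq (u + v)) := by
      rw [hau, hbv, ← mul_add, gq_scale hr, gq_scale hr, gq_scale hr]
      ring
    rw [key, abs_mul, abs_of_pos hr]
    have h1 : |gq u| ≤ 2 := gq_bound (by linarith)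
    have h2 : |gq v| ≤ 2 := gq_bound (by linarith)
    have h3 : |gq (u + v)| ≤ 2 := gq_bound (by
      calc |u + v| ≤ |u| + |v| := abs_add_le _ _
        _ ≤ 2 := by linarith)
    have : |gq u + gq v - gq (u + v)| ≤ 6 := by
      calc |gq u + gq v - gq (u + v)| ≤ |gq u + gq v| + |gq (u+v)| := abs_sub _ _
        _ ≤ |gq u| + |gq v| + |gq (u+v)| := by gcongr; exact abs_add_le _ _
        _ ≤ 6 := by linarith
    nlinarith

lemma cs_aux (a b a' b' : ℝ) : |a * a'| ≤ Real.sqrt ((a^2 + b^2) * (a'^2 + b'^2)) := by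
  rw [← Real.sqrt_sq_eq_abs]
  apply Real.sqrt_le_sqrt
  nlinarith [sq_nonneg (a*b'), sq_nonneg (b*a'), sq_nonneg (b*b'), sq_nonneg (a*a')]

lemma gq_key (x1 x2 y1 y2 c s : ℝ) (hcs : c ^ 2 + s ^ 2 = 1) :
    |gq ((c*x1 + s*x2) * (c*y1 + s*y2)) + gq ((-s*x1 + c*x2) * (-s*y1 + c*y2))
      - (gq (x1*y1) + gq (x2*y2))|
      ≤ 12 * Real.sqrt ((x1^2 + x2^2) * (y1^2 + y2^2)) := by
  set r := Real.sqrt ((x1^2 + x2^2) * (y1^2 + y2^2)) with hr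
  have hxx : (c*x1 + s*x2)^2 + (-s*x1 + c*x2)^2 = x1^2 + x2^2 := by
    linear_combination (x1^2 + x2^2) * hcs
  have hyy : (c*y1 + s*y2)^2 + (-s*y1 + c*y2)^2 = y1^2 + y2^2 := by
    linear_combination (y1^2 + y2^2) * hcs
  have hsum : (c*x1 + s*x2) * (c*y1 + s*y2) + (-s*x1 + c*x2) * (-s*y1 + c*y2)
      = x1*y1 + x2*y2 := by
    linear_combination (x1*y1 + x2*y2) * hcs
  have h1 : |x1*y1| ≤ r := cs_aux x1 x2 y1 y2
  have h2 : |x2*y2| ≤ r := by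
    have := cs_aux x2 x1 y2 y1
    calc |x2*y2| ≤ Real.sqrt ((x2^2 + x1^2) * (y2^2 + y1^2)) := this
      _ = r := by rw [hr]; ring_nf
  have h1' : |(c*x1 + s*x2) * (c*y1 + s*y2)| ≤ r := by
    have := cs_aux (c*x1 + s*x2) (-s*x1 + c*x2) (c*y1 + s*y2) (-s*y1 + c*y2)
    rwa [hxx, hyy] at this
  have h2' : |(-s*x1 + c*x2) * (-s*y1 + c*y2)| ≤ r := by
    have := cs_aux (-s*x1 + c*x2) (c*x1 + s*x2) (-s*y1 + c*y2) (c*y1 + s*y2)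
    calc |(-s*x1 + c*x2) * (-s*y1 + c*y2)|
        ≤ Real.sqrt (((-s*x1 + c*x2)^2 + (c*x1 + s*x2)^2) * ((-s*y1 + c*y2)^2 + (c*y1 + s*y2)^2)) := this
      _ = r := by rw [hr, ← hxx, ← hyy]; ring_nf
  have hb1 := gq_pair h1' h2'
  have hb2 := gq_pair h1 h2
  rw [hsum] at hb1
  calc |gq ((c*x1 + s*x2) * (c*y1 + s*y2)) + gq ((-s*x1 + c*x2) * (-s*y1 + c*y2))
        - (gq (x1*y1) + gq (x2*y2))|
      = |(gq ((c*x1 + s*x2) * (c*y1 + s*y2)) + gq ((-s*x1 + c*x2) * (-s*y1 + c*y2)) - gq (x1*y1 + x2*y2))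
          - (gq (x1*y1) + gq (x2*y2) - gq (x1*y1 + x2*y2))| := by ring_nf
    _ ≤ |gq ((c*x1 + s*x2) * (c*y1 + s*y2)) + gq ((-s*x1 + c*x2) * (-s*y1 + c*y2)) - gq (x1*y1 + x2*y2)|
          + |gq (x1*y1) + gq (x2*y2) - gq (x1*y1 + x2*y2)| := abs_sub _ _
    _ ≤ 6 * r + 6 * r := add_le_add hb1 hb2
    _ = 12 * r := by ring

variable {n : ℕ} {k ℓ : Fin n} (hkl : k ≠ ℓ) (θ : ℝ)

set_option maxRecDepth 4000 in
lemma givens_apply (hkl : k ≠ ℓ) (i q : Fin n) :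
    givens k ℓ θ i q =
      if i = k then (if q = k then cos θ else if q = ℓ then sin θ else 0)
      else if i = ℓ then (if q = k then -sin θ else if q = ℓ then cos θ else 0)
      else (if q = i then 1 else 0) := by
  unfold givens
  by_cases hik : i = k <;> by_cases hil : i = ℓ <;> by_cases hqk : q = k <;>
    by_cases hql : q = ℓ <;> simp_all [eq_comm] <;> omega

lemma sum_pair_ite (h : k ≠ ℓ) (f : Fin n → ℝ) :
    ∑ q : Fin n, (if q = k then f q else if q = ℓ then f q else 0) = f k + f ℓ := by
  have hpt : ∀ q : Fin n, (if q = k then f q else if q = ℓ then f q else 0)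
      = (if q = k then f q else 0) + (if q = ℓ then f q else 0) := by
    intro q
    by_cases h1 : q = k <;> by_cases h2 : q = ℓ <;> simp_all
  simp only [hpt, Finset.sum_add_distrib, Finset.sum_ite_eq', Finset.mem_univ, if_true]

lemma sum_pair (h : k ≠ ℓ) (a b : ℝ) :
    ∑ q : Fin n, (if q = k then a else if q = ℓ then b else 0) = a + b := by
  have hpt : ∀ q : Fin n, (if q = k then a else if q = ℓ then b else 0)
      = (if q = k then a else 0) + (if q = ℓ then b else 0) := by
    intro q; by_cases h1 : q = k <;> by_cases h2 : q = ℓ <;> simp_all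
  simp only [hpt, Finset.sum_add_distrib, Finset.sum_ite_eq', Finset.mem_univ, if_true]

lemma sum_pair_mul (h : k ≠ ℓ) (a b a' b' : ℝ) :
    ∑ q : Fin n, (if q = k then a else if q = ℓ then b else 0) *
      (if q = k then a' else if q = ℓ then b' else 0) = a * a' + b * b' := by
  rw [← sum_pair h (a * a') (b * b')]
  refine Finset.sum_congr rfl fun q _ => ?_
  by_cases h1 : q = k <;> by_cases h2 : q = ℓ <;> simp_all

lemma sum_pair_mulf (h : k ≠ ℓ) (a b : ℝ) (f : Fin n → ℝ) :
    ∑ q : Fin n, (if q = k then a else if q = ℓ then b else 0) * f q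
      = a * f k + b * f ℓ := by
  rw [← sum_pair h (a * f k) (b * f ℓ)]
  refine Finset.sum_congr rfl fun q _ => ?_
  by_cases h1 : q = k <;> by_cases h2 : q = ℓ <;> simp_all

lemma sum_f_mulpair (h : k ≠ ℓ) (a b : ℝ) (f : Fin n → ℝ) :
    ∑ q : Fin n, f q * (if q = k then a else if q = ℓ then b else 0)
      = f k * a + f ℓ * b := by
  rw [← sum_pair h (f k * a) (f ℓ * b)]
  refine Finset.sum_congr rfl fun q _ => ?_
  by_cases h1 : q = k <;> by_cases h2 : q = ℓ <;> simp_all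

lemma sum_delta_mulf (i : Fin n) (f : Fin n → ℝ) :
    ∑ q : Fin n, (if q = i then 1 else 0) * f q = f i := by
  simp [ite_mul]

lemma sum_f_muldelta (i : Fin n) (f : Fin n → ℝ) :
    ∑ q : Fin n, f q * (if q = i then 1 else 0) = f i := by
  simp [mul_ite]

lemma givens_mul_transpose (hkl : k ≠ ℓ) :
    givens k ℓ θ * (givens k ℓ θ)ᵀ = 1 := by
  have hlk : ℓ ≠ k := hkl.symm
  ext i j
  rw [Matrix.mul_apply]
  simp only [Matrix.transpose_apply, givens_apply θ hkl]
  by_cases hik : i = k <;> by_cases hil : i = ℓ <;>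
    by_cases hjk : j = k <;> by_cases hjl : j = ℓ
  all_goals (try (exfalso; exact hkl (hik ▸ hil ▸ rfl)))
  all_goals (try (exfalso; exact hkl (hjk ▸ hjl ▸ rfl)))
  all_goals simp only [hik, hil, hjk, hjl, hkl, hlk, Matrix.one_apply,
    eq_self_iff_true, if_true, if_false, iff_false, ne_eq, not_false_iff]
  all_goals (first
    | (rw [sum_pair_mul hkl]; nlinarith [Real.sin_sq_add_cos_sq θ])
    | (rw [sum_pair_mul hkl]; ring_nf; simp [hkl, hlk])
    | exact (if_neg (Ne.symm hjk)).symm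
    | exact (if_neg (Ne.symm hjl)).symm
    | (rw [sum_pair hkl, if_neg (Ne.symm hik), if_neg (Ne.symm hil)]; ring)
    | (rw [sum_delta_mulf i, if_neg hik, if_neg hil])
    | (simp_all [sum_f_muldelta, sum_delta_mulf]; done)
    | (rw [sum_pair hkl]; simp_all [eq_comm]; done)
    | (simp_all [eq_comm]; done))

variable (M : Matrix (Fin n) (Fin n) ℝ)

lemma givens_mul_k (hkl : k ≠ ℓ) (j : Fin n) :
    (givens k ℓ θ * M) k j = cos θ * M k j + sin θ * M ℓ j := by
  rw [Matrix.mul_apply]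
  simp only [givens_apply θ hkl, eq_self_iff_true, if_true]
  rw [sum_pair_mulf hkl]

lemma givens_mul_l (hkl : k ≠ ℓ) (j : Fin n) :
    (givens k ℓ θ * M) ℓ j = -sin θ * M k j + cos θ * M ℓ j := by
  rw [Matrix.mul_apply]
  simp only [givens_apply θ hkl, eq_self_iff_true, if_true, if_neg hkl.symm]
  rw [sum_pair_mulf hkl]

lemma givens_mul_other (hkl : k ≠ ℓ) {i : Fin n} (hik : i ≠ k) (hil : i ≠ ℓ) (j : Fin n) :
    (givens k ℓ θ * M) i j = M i j := by
  rw [Matrix.mul_apply]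
  simp only [givens_apply θ hkl, if_neg hik, if_neg hil]
  rw [sum_delta_mulf i]

lemma mul_givensT_k (hkl : k ≠ ℓ) (j : Fin n) :
    (M * (givens k ℓ θ)ᵀ) j k = cos θ * M j k + sin θ * M j ℓ := by
  rw [Matrix.mul_apply]
  simp only [Matrix.transpose_apply, givens_apply θ hkl, eq_self_iff_true, if_true]
  rw [sum_f_mulpair hkl]; ring

lemma mul_givensT_l (hkl : k ≠ ℓ) (j : Fin n) :
    (M * (givens k ℓ θ)ᵀ) j ℓ = -sin θ * M j k + cos θ * M j ℓ := by
  rw [Matrix.mul_apply]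
  simp only [Matrix.transpose_apply, givens_apply θ hkl, eq_self_iff_true, if_true,
    if_neg hkl.symm]
  rw [sum_f_mulpair hkl]; ring

lemma mul_givensT_other (hkl : k ≠ ℓ) {i : Fin n} (hik : i ≠ k) (hil : i ≠ ℓ) (j : Fin n) :
    (M * (givens k ℓ θ)ᵀ) j i = M j i := by
  rw [Matrix.mul_apply]
  simp only [Matrix.transpose_apply, givens_apply θ hkl, if_neg hik, if_neg hil]
  rw [sum_f_muldelta i]

variable {n : ℕ}

lemma specNorm_nonneg (A : Matrix (Fin n) (Fin n) ℝ) : 0 ≤ specNorm A := norm_nonneg _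

lemma col_sq_le (A : Matrix (Fin n) (Fin n) ℝ) (k : Fin n) :
    ∑ q : Fin n, (A q k) ^ 2 ≤ specNorm A ^ 2 := by
  set T := LinearMap.toContinuousLinearMap (Matrix.toEuclideanLin A) with hT
  set v : EuclideanSpace ℝ (Fin n) := EuclideanSpace.single k 1 with hv
  have hnv : ‖v‖ = 1 := by rw [hv, EuclideanSpace.norm_single]; norm_num
  have hTv : ∀ q, T v q = A q k := by
    intro q
    show Matrix.toEuclideanLin A v q = A q k
    rw [Matrix.toEuclideanLin_apply]
    show (A.mulVec ((WithLp.equiv 2 (Fin n → ℝ)) v)) q = A q k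
    have : (WithLp.equiv 2 (Fin n → ℝ)) v = Pi.single k 1 := rfl
    rw [this, Matrix.mulVec_single]
    simp
  have hle : ‖T v‖ ≤ specNorm A := by
    calc ‖T v‖ ≤ ‖T‖ * ‖v‖ := T.le_opNorm v
      _ = specNorm A := by rw [hnv, mul_one]; rfl
  have hsq : ‖T v‖ ^ 2 = ∑ q : Fin n, (A q k) ^ 2 := by
    rw [EuclideanSpace.norm_eq, Real.sq_sqrt (by positivity)]
    refine Finset.sum_congr rfl fun q _ => ?_
    rw [hTv q, Real.norm_eq_abs, sq_abs]
  calc ∑ q : Fin n, (A q k) ^ 2 = ‖T v‖ ^ 2 := hsq.symm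
    _ ≤ specNorm A ^ 2 := by
        have h0 : 0 ≤ ‖T v‖ := norm_nonneg _
        nlinarith

lemma specNorm_transpose (A : Matrix (Fin n) (Fin n) ℝ) : specNorm Aᵀ = specNorm A := by
  unfold specNorm
  have h1 : Aᵀ = Aᴴ := by
    ext i j; simp [Matrix.conjTranspose_apply]
  rw [h1, Matrix.toEuclideanLin_conjTranspose_eq_adjoint,
    LinearMap.adjoint_toContinuousLinearMap]
  exact LinearIsometryEquiv.norm_map ContinuousLinearMap.adjoint _

lemma row_sq_le (A : Matrix (Fin n) (Fin n) ℝ) (k : Fin n) :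
    ∑ q : Fin n, (A k q) ^ 2 ≤ specNorm A ^ 2 := by
  have := col_sq_le Aᵀ k
  rw [specNorm_transpose] at this
  simpa using this

lemma fhat_eq (x y : ℝ) : fhat x y = gq (x * y) := by
  unfold fhat gq
  split_ifs with h
  · rw [h]; simp
  · rfl

end Aux

/-- Applying a Givens rotation changes the quasi-entropy by at most
`C · ‖M‖ · ‖M⁻¹‖` for an absolute constant `C`. -/
theorem stmt15 :
    ∃ C : ℝ, 0 < C ∧ ∀ (n : ℕ) (M : Matrix (Fin n) (Fin n) ℝ), IsUnit M.det →
      ∀ (k ℓ : Fin n), k < ℓ → ∀ θ : ℝ,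
      |Phi (givens k ℓ θ * M) - Phi M| ≤ C * specNorm M * specNorm M⁻¹ := by
  refine ⟨24, by norm_num, fun n M _ k l hkl θ => ?_⟩
  have hne : k ≠ l := ne_of_lt hkl
  have hcs : Real.cos θ ^ 2 + Real.sin θ ^ 2 = 1 := Real.cos_sq_add_sin_sq θ
  set S := givens k l θ with hS
  have hSST : S * Sᵀ = 1 := givens_mul_transpose θ hne
  have hinv : (S * M)⁻¹ = M⁻¹ * Sᵀ := by
    rw [Matrix.mul_inv_rev, Matrix.inv_eq_right_inv hSST]
  set P : Fin n → ℝ := fun j => (M k j)^2 + (M l j)^2 with hP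
  set Q : Fin n → ℝ := fun j => (M⁻¹ j k)^2 + (M⁻¹ j l)^2 with hQ
  set r : Fin n → ℝ := fun j => Real.sqrt (P j * Q j) with hrdef
  set D : Fin n → ℝ := fun j =>
    (fhat ((S*M) k j) ((S*M)⁻¹ j k) + fhat ((S*M) l j) ((S*M)⁻¹ j l))
    - (fhat (M k j) (M⁻¹ j k) + fhat (M l j) (M⁻¹ j l)) with hD
  have hinner : ∀ j : Fin n,
      ∑ i : Fin n, (fhat (M i j) (M⁻¹ j i) - fhat ((S*M) i j) ((S*M)⁻¹ j i)) = -D j := by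
    intro j
    have hzero : ∀ i ∈ (Finset.univ : Finset (Fin n)), i ∉ ({k, l} : Finset (Fin n)) →
        fhat (M i j) (M⁻¹ j i) - fhat ((S*M) i j) ((S*M)⁻¹ j i) = 0 := by
      intro i _ hi
      simp only [Finset.mem_insert, Finset.mem_singleton, not_or] at hi
      obtain ⟨hik, hil⟩ := hi
      rw [show (S*M) i j = M i j from givens_mul_other θ M hne hik hil j,
        hinv, show (M⁻¹ * Sᵀ) j i = M⁻¹ j i from mul_givensT_other θ M⁻¹ hne hik hil j,
        sub_self]
    rw [← Finset.sum_subset (Finset.subset_univ ({k, l} : Finset (Fin n))) hzero,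
      Finset.sum_pair hne, hD]
    ring
  have hPhi : Phi (S * M) - Phi M = -∑ j : Fin n, D j := by
    unfold Phi
    rw [neg_sub_neg, ← Finset.sum_sub_distrib]
    simp_rw [← Finset.sum_sub_distrib]
    rw [Finset.sum_comm]
    rw [Finset.sum_congr rfl fun j _ => hinner j, Finset.sum_neg_distrib]
  have hDb : ∀ j : Fin n, |D j| ≤ 12 * r j := by
    intro j
    have e1 : (S*M) k j = cos θ * M k j + sin θ * M l j := givens_mul_k θ M hne j
    have e2 : (S*M) l j = -sin θ * M k j + cos θ * M l j := givens_mul_l θ M hne j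
    have e3 : (S*M)⁻¹ j k = cos θ * M⁻¹ j k + sin θ * M⁻¹ j l := by
      rw [hinv]; exact mul_givensT_k θ M⁻¹ hne j
    have e4 : (S*M)⁻¹ j l = -sin θ * M⁻¹ j k + cos θ * M⁻¹ j l := by
      rw [hinv]; exact mul_givensT_l θ M⁻¹ hne j
    have hkey := gq_key (M k j) (M l j) (M⁻¹ j k) (M⁻¹ j l) (cos θ) (sin θ) hcs
    simp only [hD, e1, e2, e3, e4, fhat_eq]
    exact hkey
  have hP0 : ∀ j, 0 ≤ P j := fun j => by simp only [hP]; positivity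
  have hQ0 : ∀ j, 0 ≤ Q j := fun j => by simp only [hQ]; positivity
  have hsumr : ∑ j : Fin n, r j ≤ 2 * specNorm M * specNorm M⁻¹ := by
    have hCS : (∑ j : Fin n, r j) ^ 2 ≤ (∑ j : Fin n, P j) * (∑ j : Fin n, Q j) := by
      have hsplit : ∀ j : Fin n, r j = Real.sqrt (P j) * Real.sqrt (Q j) := fun j =>
        Real.sqrt_mul (hP0 j) _
      calc (∑ j : Fin n, r j) ^ 2
          = (∑ j : Fin n, Real.sqrt (P j) * Real.sqrt (Q j)) ^ 2 := by
            rw [Finset.sum_congr rfl fun j _ => hsplit j]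
        _ ≤ (∑ j : Fin n, Real.sqrt (P j) ^ 2) * (∑ j : Fin n, Real.sqrt (Q j) ^ 2) :=
            Finset.sum_mul_sq_le_sq_mul_sq _ _ _
        _ = (∑ j : Fin n, P j) * (∑ j : Fin n, Q j) := by
            rw [Finset.sum_congr rfl fun j _ => Real.sq_sqrt (hP0 j),
              Finset.sum_congr rfl fun j _ => Real.sq_sqrt (hQ0 j)]
    have hPsum : ∑ j : Fin n, P j ≤ 2 * specNorm M ^ 2 := by
      simp only [hP]
      rw [Finset.sum_add_distrib]
      have h1 := row_sq_le M k
      have h2 := row_sq_le M l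
      linarith
    have hQsum : ∑ j : Fin n, Q j ≤ 2 * specNorm M⁻¹ ^ 2 := by
      simp only [hQ]
      rw [Finset.sum_add_distrib]
      have h1 := col_sq_le M⁻¹ k
      have h2 := col_sq_le M⁻¹ l
      linarith
    have hr0 : 0 ≤ ∑ j : Fin n, r j := Finset.sum_nonneg fun j _ => Real.sqrt_nonneg _
    have hPn : 0 ≤ ∑ j : Fin n, P j := Finset.sum_nonneg fun j _ => hP0 j
    have hQn : 0 ≤ ∑ j : Fin n, Q j := Finset.sum_nonneg fun j _ => hQ0 j
    have hM0 := specNorm_nonneg M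
    have hM1 := specNorm_nonneg M⁻¹
    have hb0 : (0:ℝ) ≤ 2 * specNorm M * specNorm M⁻¹ := by positivity
    have hsq : (∑ j : Fin n, r j) ^ 2 ≤ (2 * specNorm M * specNorm M⁻¹) ^ 2 := by
      calc (∑ j : Fin n, r j) ^ 2 ≤ (∑ j : Fin n, P j) * (∑ j : Fin n, Q j) := hCS
        _ ≤ (2 * specNorm M ^ 2) * (2 * specNorm M⁻¹ ^ 2) :=
            mul_le_mul hPsum hQsum hQn (by positivity)
        _ = (2 * specNorm M * specNorm M⁻¹) ^ 2 := by ring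
    calc ∑ j : Fin n, r j = Real.sqrt ((∑ j : Fin n, r j) ^ 2) := (Real.sqrt_sq hr0).symm
      _ ≤ Real.sqrt ((2 * specNorm M * specNorm M⁻¹) ^ 2) := Real.sqrt_le_sqrt hsq
      _ = 2 * specNorm M * specNorm M⁻¹ := Real.sqrt_sq hb0
  calc |Phi (S * M) - Phi M| = |∑ j : Fin n, D j| := by rw [hPhi, abs_neg]
    _ ≤ ∑ j : Fin n, |D j| := Finset.abs_sum_le_sum_abs _ _
    _ ≤ ∑ j : Fin n, 12 * r j := Finset.sum_le_sum fun j _ => hDb j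
    _ = 12 * ∑ j : Fin n, r j := by rw [Finset.mul_sum]
    _ ≤ 12 * (2 * specNorm M * specNorm M⁻¹) := by
        have : (0:ℝ) ≤ 12 := by norm_num
        nlinarith [hsumr]
    _ = 24 * specNorm M * specNorm M⁻¹ := by ring
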